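/- The stabilizer of the conic C is transitive on the internal points of C: for any vectors v, w ∈ K³ such that −Q(v) and −Q(w) are both nonsquares in K, there exist a similitude A of Q and a nonzero scalar λ ∈ K with A·v = λ·w. -/

import Mathlib

/-- The quadratic form `Q(x₀,x₁,x₂) = x₀x₁ - x₂²` on `K³`. -/
def quadForm (K : Type*) [CommRing K] (v : Fin 3 → K) : K := v 0 * v 1 - v 2 ^ 2

/-- A matrix `A ∈ GL(3,K)` is a similitude of `Q` if `Q(A·x) = c·Q(x)` for some `c ∈ K*`. -/
def IsSimilitude (K : Type*) [CommRing K] (A : Matrix (Fin 3) (Fin 3) K) : Prop :=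
  IsUnit A ∧ ∃ c : K, c ≠ 0 ∧ ∀ x : Fin 3 → K, quadForm K (A.mulVec x) = c * quadForm K x

/-- The 3×3 matrix on `K³ ≅ Sym₂(K²)` induced by congruence with `[[p,q],[r,s]]`. -/
def simMat {K : Type*} [CommRing K] (p q r s : K) : Matrix (Fin 3) (Fin 3) K :=
  !![p^2, q^2, 2*p*q; r^2, s^2, 2*r*s; p*r, q*s, p*s+q*r]

lemma simMat_mulVec {K : Type*} [CommRing K] (p q r s : K) (x : Fin 3 → K) :
    (simMat p q r s).mulVec x = ![p^2*x 0 + q^2*x 1 + 2*p*q*x 2,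
      r^2*x 0 + s^2*x 1 + 2*r*s*x 2, p*r*x 0 + q*s*x 1 + (p*s+q*r)*x 2] := by
  funext i
  fin_cases i <;>
    simp [simMat, Matrix.mulVec, dotProduct, Fin.sum_univ_three]

lemma simMat_det {K : Type*} [CommRing K] (p q r s : K) :
    (simMat p q r s).det = (p*s - q*r)^3 := by
  simp [simMat, Matrix.det_fin_three]; ring

lemma simMat_quadForm {K : Type*} [CommRing K] (p q r s : K) (x : Fin 3 → K) :
    quadForm K ((simMat p q r s).mulVec x) = (p*s - q*r)^2 * quadForm K x := by
  rw [simMat_mulVec]; simp [quadForm]; ring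

lemma simMat_isSimilitude {K : Type*} [Field K] {p q r s : K} (h : p*s - q*r ≠ 0) :
    IsSimilitude K (simMat p q r s) := by
  refine ⟨?_, (p*s - q*r)^2, pow_ne_zero _ h, fun x => simMat_quadForm p q r s x⟩
  rw [Matrix.isUnit_iff_isUnit_det, simMat_det]
  exact (h.isUnit).pow 3

lemma isSimilitude_mul {K : Type*} [Field K] {A B : Matrix (Fin 3) (Fin 3) K}
    (hA : IsSimilitude K A) (hB : IsSimilitude K B) : IsSimilitude K (A * B) := by
  obtain ⟨hAu, cA, hcA, hA⟩ := hA
  obtain ⟨hBu, cB, hcB, hB⟩ := hB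
  exact ⟨hAu.mul hBu, cA * cB, mul_ne_zero hcA hcB, fun x => by
    rw [← Matrix.mulVec_mulVec, hA, hB, mul_assoc]⟩

/-- The stabilizer of the conic `C` is transitive on the internal points of `C`. -/
theorem similitudes_transitive_on_internal_points
    (K : Type*) [Field K] [Fintype K] (hodd : Odd (Fintype.card K))
    (v w : Fin 3 → K)
    (hv : ¬ IsSquare (-(quadForm K v))) (hw : ¬ IsSquare (-(quadForm K w))) :
    ∃ A : Matrix (Fin 3) (Fin 3) K, IsSimilitude K A ∧
      ∃ lam : K, lam ≠ 0 ∧ A.mulVec v = lam • w := by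
  classical
  set d := quadForm K v with hdv
  set d' := quadForm K w with hdw
  have hd : d ≠ 0 := by
    intro h; exact hv (by rw [h, neg_zero]; exact IsSquare.zero)
  have hd' : d' ≠ 0 := by
    intro h; exact hw (by rw [h, neg_zero]; exact IsSquare.zero)
  have ha : v 0 ≠ 0 := by
    intro h
    apply hv
    have : -(quadForm K v) = v 2 * v 2 := by simp [quadForm, h]; ring
    exact ⟨v 2, this⟩
  have ha' : w 0 ≠ 0 := by
    intro h
    apply hw
    have : -(quadForm K w) = w 2 * w 2 := by simp [quadForm, h]; ring
    exact ⟨w 2, this⟩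
  -- the product of the two nonsquares is a square
  have hdd' : IsSquare (d * d') := by
    have h1 := quadraticChar_neg_one_iff_not_isSquare.2 hv
    have h2 := quadraticChar_neg_one_iff_not_isSquare.2 hw
    have h3 : quadraticChar K (d * d') = 1 := by
      have he : d * d' = (-(quadForm K v)) * (-(quadForm K w)) := by rw [← hdv, ← hdw]; ring
      rw [he, map_mul, h1, h2]; ring
    exact (quadraticChar_one_iff_isSquare (mul_ne_zero hd hd')).1 h3
  obtain ⟨s0, hs0⟩ := hdd'
  have hs0' : s0 ≠ 0 := by
    intro h; rw [h, mul_zero] at hs0; exact (mul_ne_zero hd hd') hs0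
  -- solve `v0 x² + (d/v0) y² = w0`
  have hcard : Fintype.card K % 2 = 1 := Nat.odd_iff.mp hodd
  obtain ⟨x, y, hxy0⟩ := FiniteField.exists_root_sum_quadratic
    (f := Polynomial.C (v 0) * Polynomial.X ^ 2 + Polynomial.C 0 * Polynomial.X + Polynomial.C 0)
    (g := Polynomial.C (d / v 0) * Polynomial.X ^ 2 + Polynomial.C 0 * Polynomial.X
      + Polynomial.C (-(w 0)))
    (Polynomial.degree_quadratic ha) (Polynomial.degree_quadratic (div_ne_zero hd ha)) hcard
  have hxy : v 0 * x ^ 2 + d / v 0 * y ^ 2 = w 0 := by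
    simp only [Polynomial.eval_add, Polynomial.eval_mul, Polynomial.eval_pow,
      Polynomial.eval_C, Polynomial.eval_X] at hxy0
    linear_combination hxy0
  obtain ⟨t, htdef⟩ : ∃ t : K, t = s0 / (d * w 0) := ⟨_, rfl⟩
  have ht : t ≠ 0 := by rw [htdef]; exact div_ne_zero hs0' (mul_ne_zero hd ha')
  have hts : t * (d * w 0) = s0 := by rw [htdef]; field_simp
  have ht2 : t ^ 2 * d * w 0 ^ 2 = d' := by
    have h4 : d * (t ^ 2 * d * w 0 ^ 2) = d * d' := by
      rw [hs0]; linear_combination (t * (d * w 0) + s0) * hts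
    exact mul_left_cancel₀ hd h4
  set A1 := simMat (1:K) 0 (-(v 2) / v 0) 1 with hA1
  set Ah := simMat x y (-(d / v 0) * y * t) (v 0 * x * t) with hAh
  set A2 := simMat (1:K) 0 (w 2 / w 0) 1 with hA2
  have hdet1 : (1:K) * 1 - 0 * (-(v 2) / v 0) ≠ 0 := by simp
  have hdeth : x * (v 0 * x * t) - y * (-(d / v 0) * y * t) ≠ 0 := by
    have : x * (v 0 * x * t) - y * (-(d / v 0) * y * t)
        = t * (v 0 * x ^ 2 + d / v 0 * y ^ 2) := by ring
    rw [this, hxy]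
    exact mul_ne_zero ht ha'
  have hdet2 : (1:K) * 1 - 0 * (w 2 / w 0) ≠ 0 := by simp
  have e1 : A1.mulVec v = ![v 0, d / v 0, 0] := by
    rw [hA1, simMat_mulVec]
    funext i
    fin_cases i <;> simp [hdv, quadForm] <;> field_simp <;> ring
  have e2 : Ah.mulVec ![v 0, d / v 0, 0] = ![w 0, d' / w 0, 0] := by
    rw [hAh, simMat_mulVec]
    funext i
    fin_cases i
    · show x^2 * v 0 + y^2 * (d / v 0) + 2*x*y*(0:K) = w 0
      linear_combination hxy
    · show (-(d / v 0) * y * t)^2 * v 0 + (v 0 * x * t)^2 * (d / v 0)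
          + 2 * (-(d / v 0) * y * t) * (v 0 * x * t) * (0:K) = d' / w 0
      have hinv : v 0 * (v 0)⁻¹ = 1 := mul_inv_cancel₀ ha
      rw [eq_div_iff ha']
      linear_combination (t^2*d*(v 0)⁻¹*(v 0)*(w 0)) * hxy + ((v 0)⁻¹*(v 0)) * ht2
        + d' * hinv
    · show x * (-(d / v 0) * y * t) * v 0 + y * (v 0 * x * t) * (d / v 0)
          + (x * (v 0 * x * t) + y * (-(d / v 0) * y * t)) * (0:K) = 0
      field_simp
      ring
  have e3 : A2.mulVec ![w 0, d' / w 0, 0] = w := by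
    rw [hA2, simMat_mulVec]
    funext i
    fin_cases i <;> simp [hdw, quadForm] <;> field_simp <;> ring
  refine ⟨A2 * (Ah * A1), isSimilitude_mul (simMat_isSimilitude hdet2)
    (isSimilitude_mul (simMat_isSimilitude hdeth) (simMat_isSimilitude hdet1)),
    1, one_ne_zero, ?_⟩
  rw [one_smul, ← Matrix.mulVec_mulVec, ← Matrix.mulVec_mulVec, e1, e2, e3]
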